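/- Let B be a bicategory with 1-morphisms X : a → b and Y : b → a, an adjunction X ⊣ Y with counit ε̃ : X ⊗ Y → I_b and unit η̃ : I_a → Y ⊗ X, and an adjunction Y ⊣ X with counit ε : Y ⊗ X → I_a and unit η : I_b → X ⊗ Y, such that ε̃ ∘ η : I_b → I_b is invertible. Consider the parallel pair of 2-morphisms l, r : X ⊗ Y ⊗ X ⊗ Y → X ⊗ Y in the hom-category B(b,b), where r := ε̃ ⊗ 1_{X ⊗ Y} applies ε̃ to the leftmost X ⊗ Y pair and l := 1_{X ⊗ Y} ⊗ ε̃ applies ε̃ to the rightmost X ⊗ Y pair. Then ε̃ : X ⊗ Y → I_b is a coequalizer of (l, r): ε̃ ∘ l = ε̃ ∘ r, and for every 1-morphism Z : b → b and every 2-morphism φ : X ⊗ Y → Z with φ ∘ l = φ ∘ r there exists a unique 2-morphism ζ : I_b → Z with ζ ∘ ε̃ = φ. (Equivalently, X ⊗_A Y ≅ I_b, where A := Y ⊗ X and l, r are induced by the right A-action on X and the left A-action on Y coming from ε̃.) -/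

import Mathlib

/-!
For a biadjunction Y ⊣ X ⊣ Y with ε̃ ∘ η invertible, the counit ε̃ : X ⊗ Y → I_b
is a coequalizer of the pair (l, r), i.e. X ⊗_A Y ≅ I_b for A := Y ⊗ X.

Conventions: the paper's horizontal composite `F ⊗ G` (first `G`, then `F`) is
Mathlib's `G ≫ F`.  Thus the paper's `X ⊗ Y : b → b` is `Y ≫ X`; the adjunction
`X ⊣ Y` has counit `ε̃`, i.e. `counit₁ : Y ≫ X ⟶ 𝟙 b`, and unit `η̃`, i.e.
`unit₁ : 𝟙 a ⟶ X ≫ Y`; the adjunction `Y ⊣ X` has counit `ε`, i.e.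
`counit₂ : X ≫ Y ⟶ 𝟙 a`, and unit `η`, i.e. `unit₂ : 𝟙 b ⟶ Y ≫ X`.  The
paper's `ε̃ ∘ η : I_b → I_b` is `unit₂ ≫ counit₁`, invertible with inverse
`θinv`.  The paper's `r := ε̃ ⊗ 1_{X ⊗ Y}` (ε̃ on the leftmost `X ⊗ Y` pair)
is `(Y ≫ X) ◁ counit₁ ≫ (ρ_ (Y ≫ X)).hom`, and `l := 1_{X ⊗ Y} ⊗ ε̃`
(ε̃ on the rightmost pair) is `counit₁ ▷ (Y ≫ X) ≫ (λ_ (Y ≫ X)).hom`.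
-/

open CategoryTheory Bicategory

universe w v u

variable {C : Type u} [Bicategory.{w, v} C]

/-- Conjugating a 2-endomorphism of `𝟙 b` through `ρ_` and composing with a
2-morphism into `𝟙 b` is the same as postcomposing. -/
lemma conj_lemma {b : C} {f : b ⟶ b} (eps : f ⟶ 𝟙 b) (σ : 𝟙 b ⟶ 𝟙 b) :
    (ρ_ f).inv ≫ f ◁ σ ≫ (ρ_ f).hom ≫ eps = eps ≫ σ := by
  have h1 : f ◁ σ ≫ eps ▷ 𝟙 b = eps ▷ 𝟙 b ≫ 𝟙 b ◁ σ := whisker_exchange eps σ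
  have h2 : eps ▷ 𝟙 b ≫ (λ_ (𝟙 b)).hom = (ρ_ f).hom ≫ eps := by
    rw [unitors_equal]; exact rightUnitor_naturality eps
  have h3 : 𝟙 b ◁ σ ≫ (λ_ (𝟙 b)).hom = (λ_ (𝟙 b)).hom ≫ σ := leftUnitor_naturality σ
  have key : f ◁ σ ≫ (ρ_ f).hom ≫ eps = (ρ_ f).hom ≫ eps ≫ σ := by
    calc f ◁ σ ≫ (ρ_ f).hom ≫ eps
        = f ◁ σ ≫ eps ▷ 𝟙 b ≫ (λ_ (𝟙 b)).hom := by rw [h2]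
      _ = eps ▷ 𝟙 b ≫ 𝟙 b ◁ σ ≫ (λ_ (𝟙 b)).hom := by rw [← Category.assoc, h1, Category.assoc]
      _ = eps ▷ 𝟙 b ≫ (λ_ (𝟙 b)).hom ≫ σ := by rw [h3]
      _ = (ρ_ f).hom ≫ eps ≫ σ := by rw [← Category.assoc, h2, Category.assoc]
  rw [key, ← Category.assoc, Iso.inv_hom_id, Category.id_comp]

/-- Under the above hypotheses, `ε̃` coequalizes `(l, r)` and is
universal among 2-morphisms doing so: for every `Z : b ⟶ b` and
`φ : X ⊗ Y → Z` with `φ ∘ l = φ ∘ r` there is a unique `ζ : I_b → Z` with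
`ζ ∘ ε̃ = φ`. -/
theorem counit_is_coequalizer {a b : C} (X : a ⟶ b) (Y : b ⟶ a)
    (counit₁ : Y ≫ X ⟶ 𝟙 b) (unit₁ : 𝟙 a ⟶ X ≫ Y)
    (counit₂ : X ≫ Y ⟶ 𝟙 a) (unit₂ : 𝟙 b ⟶ Y ≫ X)
    (zorro₁ : (λ_ X).inv ≫ unit₁ ▷ X ≫ (α_ X Y X).hom ≫ X ◁ counit₁ ≫ (ρ_ X).hom = 𝟙 X)
    (zorro₂ : (ρ_ Y).inv ≫ Y ◁ unit₁ ≫ (α_ Y X Y).inv ≫ counit₁ ▷ Y ≫ (λ_ Y).hom = 𝟙 Y)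
    (zorro₃ : (λ_ Y).inv ≫ unit₂ ▷ Y ≫ (α_ Y X Y).hom ≫ Y ◁ counit₂ ≫ (ρ_ Y).hom = 𝟙 Y)
    (zorro₄ : (ρ_ X).inv ≫ X ◁ unit₂ ≫ (α_ X Y X).inv ≫ counit₂ ▷ X ≫ (λ_ X).hom = 𝟙 X)
    (θinv : 𝟙 b ⟶ 𝟙 b)
    (hθ₁ : (unit₂ ≫ counit₁) ≫ θinv = 𝟙 (𝟙 b))
    (hθ₂ : θinv ≫ (unit₂ ≫ counit₁) = 𝟙 (𝟙 b)) :
    ((counit₁ ▷ (Y ≫ X) ≫ (λ_ (Y ≫ X)).hom) ≫ counit₁ =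
        ((Y ≫ X) ◁ counit₁ ≫ (ρ_ (Y ≫ X)).hom) ≫ counit₁) ∧
    (∀ (Z : b ⟶ b) (φ : Y ≫ X ⟶ Z),
      (counit₁ ▷ (Y ≫ X) ≫ (λ_ (Y ≫ X)).hom) ≫ φ =
          ((Y ≫ X) ◁ counit₁ ≫ (ρ_ (Y ≫ X)).hom) ≫ φ →
        ∃! ζ : 𝟙 b ⟶ Z, counit₁ ≫ ζ = φ) := by
  constructor
  · -- ε̃ coequalizes (l, r)
    calc (counit₁ ▷ (Y ≫ X) ≫ (λ_ (Y ≫ X)).hom) ≫ counit₁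
        = counit₁ ▷ (Y ≫ X) ≫ 𝟙 b ◁ counit₁ ≫ (λ_ (𝟙 b)).hom := by
          rw [Category.assoc, leftUnitor_naturality]
      _ = (Y ≫ X) ◁ counit₁ ≫ counit₁ ▷ 𝟙 b ≫ (λ_ (𝟙 b)).hom := by
          rw [← Category.assoc, ← whisker_exchange, Category.assoc]
      _ = (Y ≫ X) ◁ counit₁ ≫ counit₁ ▷ 𝟙 b ≫ (ρ_ (𝟙 b)).hom := by rw [unitors_equal]
      _ = ((Y ≫ X) ◁ counit₁ ≫ (ρ_ (Y ≫ X)).hom) ≫ counit₁ := by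
          rw [rightUnitor_naturality, Category.assoc]
  · intro Z φ hφ
    -- key identity: ε̃ ∘ η ∘ φ = conjugated (η ∘ ε̃) ∘ φ
    have key : counit₁ ≫ unit₂ ≫ φ =
        (ρ_ (Y ≫ X)).inv ≫ (Y ≫ X) ◁ (unit₂ ≫ counit₁) ≫ (ρ_ (Y ≫ X)).hom ≫ φ := by
      have hT : ((ρ_ (Y ≫ X)).inv ≫ (Y ≫ X) ◁ unit₂) ≫
            (counit₁ ▷ (Y ≫ X) ≫ (λ_ (Y ≫ X)).hom) ≫ φ =
          ((ρ_ (Y ≫ X)).inv ≫ (Y ≫ X) ◁ unit₂) ≫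
            ((Y ≫ X) ◁ counit₁ ≫ (ρ_ (Y ≫ X)).hom) ≫ φ := by rw [hφ]
      have hL : ((ρ_ (Y ≫ X)).inv ≫ (Y ≫ X) ◁ unit₂) ≫
          (counit₁ ▷ (Y ≫ X) ≫ (λ_ (Y ≫ X)).hom) = counit₁ ≫ unit₂ := by
        calc ((ρ_ (Y ≫ X)).inv ≫ (Y ≫ X) ◁ unit₂) ≫ (counit₁ ▷ (Y ≫ X) ≫ (λ_ (Y ≫ X)).hom)
            = (ρ_ (Y ≫ X)).inv ≫ ((Y ≫ X) ◁ unit₂ ≫ counit₁ ▷ (Y ≫ X)) ≫ (λ_ (Y ≫ X)).hom := by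
              simp only [Category.assoc]
          _ = (ρ_ (Y ≫ X)).inv ≫ (counit₁ ▷ 𝟙 b ≫ 𝟙 b ◁ unit₂) ≫ (λ_ (Y ≫ X)).hom := by
              rw [whisker_exchange]
          _ = (ρ_ (Y ≫ X)).inv ≫ counit₁ ▷ 𝟙 b ≫ (λ_ (𝟙 b)).hom ≫ unit₂ := by
              simp only [Category.assoc, leftUnitor_naturality]
          _ = (ρ_ (Y ≫ X)).inv ≫ counit₁ ▷ 𝟙 b ≫ (ρ_ (𝟙 b)).hom ≫ unit₂ := by
              rw [unitors_equal]
          _ = counit₁ ≫ unit₂ := by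
              rw [rightUnitor_naturality_assoc]; simp
      have hR : ((ρ_ (Y ≫ X)).inv ≫ (Y ≫ X) ◁ unit₂) ≫
            ((Y ≫ X) ◁ counit₁ ≫ (ρ_ (Y ≫ X)).hom) =
          (ρ_ (Y ≫ X)).inv ≫ (Y ≫ X) ◁ (unit₂ ≫ counit₁) ≫ (ρ_ (Y ≫ X)).hom := by
        simp only [Category.assoc, Bicategory.whiskerLeft_comp]
      rw [← Category.assoc, hL, ← Category.assoc, hR] at hT
      simpa only [Category.assoc] using hT
    refine ⟨θinv ≫ unit₂ ≫ φ, ?_, ?_⟩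
    · -- counit₁ ≫ θinv ≫ unit₂ ≫ φ = φ
      show counit₁ ≫ θinv ≫ unit₂ ≫ φ = φ
      have hconj := conj_lemma counit₁ θinv
      calc counit₁ ≫ θinv ≫ unit₂ ≫ φ
          = ((ρ_ (Y ≫ X)).inv ≫ (Y ≫ X) ◁ θinv ≫ (ρ_ (Y ≫ X)).hom ≫ counit₁) ≫
              unit₂ ≫ φ := by rw [hconj, Category.assoc]
        _ = (ρ_ (Y ≫ X)).inv ≫ (Y ≫ X) ◁ θinv ≫ (ρ_ (Y ≫ X)).hom ≫
              counit₁ ≫ unit₂ ≫ φ := by simp only [Category.assoc]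
        _ = (ρ_ (Y ≫ X)).inv ≫ (Y ≫ X) ◁ θinv ≫ (ρ_ (Y ≫ X)).hom ≫ (ρ_ (Y ≫ X)).inv ≫
              (Y ≫ X) ◁ (unit₂ ≫ counit₁) ≫ (ρ_ (Y ≫ X)).hom ≫ φ := by rw [key]
        _ = (ρ_ (Y ≫ X)).inv ≫ ((Y ≫ X) ◁ θinv ≫ (Y ≫ X) ◁ (unit₂ ≫ counit₁)) ≫
              (ρ_ (Y ≫ X)).hom ≫ φ := by
            simp only [Iso.hom_inv_id_assoc, Category.assoc]
        _ = (ρ_ (Y ≫ X)).inv ≫ (Y ≫ X) ◁ (θinv ≫ unit₂ ≫ counit₁) ≫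
              (ρ_ (Y ≫ X)).hom ≫ φ := by
            rw [← Bicategory.whiskerLeft_comp]
        _ = φ := by rw [hθ₂]; simp
    · intro ζ hζ
      have h : ζ = (θinv ≫ (unit₂ ≫ counit₁)) ≫ ζ := by rw [hθ₂, Category.id_comp]
      rw [h]
      simp only [Category.assoc, hζ]
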